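/- Let F : (Fin d → Fin n) → ℂ be an order-d complex tensor that is partial symmetric with respect to its first m indices, where m < d. For an index j with 1 ≤ j ≤ m, let π_{j,m+1} be the transposition of positions j and m+1, and write F_{π_{j,m+1}}(i) = F(i ∘ π_{j,m+1}). Then the tensor G = F + Σ_{j=1}^{m} F_{π_{j,m+1}} is partial symmetric with respect to its first m+1 indices. -/

import Mathlib

private lemma lemA {d n m : ℕ} (hm : m < d) (F : (Fin d → Fin n) → ℂ)
    (hF : ∀ σ : Equiv.Perm (Fin d), (∀ p : Fin d, m ≤ (p : ℕ) → σ p = p) →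
      ∀ i : Fin d → Fin n, F (i ∘ ⇑σ) = F i)
    (σ : Equiv.Perm (Fin d)) (hσ : ∀ p : Fin d, m ≤ (p : ℕ) → σ p = p)
    (i : Fin d → Fin n) :
    F (i ∘ ⇑σ) + ∑ j : Fin m, F ((i ∘ ⇑σ) ∘ ⇑(Equiv.swap (Fin.castLE hm.le j) ⟨m, hm⟩))
      = F i + ∑ j : Fin m, F (i ∘ ⇑(Equiv.swap (Fin.castLE hm.le j) ⟨m, hm⟩)) := by
  have hσM : σ ⟨m, hm⟩ = ⟨m, hm⟩ := hσ _ le_rfl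
  have hσ' : ∀ p : Fin d, m ≤ (p : ℕ) → σ⁻¹ p = p := by
    intro p hp
    conv_lhs => rw [← hσ p hp]
    simp
  have hlt : ∀ x : Fin d, (x : ℕ) < m → ((σ x) : ℕ) < m := by
    intro x hx
    by_contra h
    push_neg at h
    have h2 : σ x = x := σ.injective (hσ (σ x) h)
    rw [h2] at h
    omega
  have hlt' : ∀ x : Fin d, (x : ℕ) < m → ((σ⁻¹ x) : ℕ) < m := by
    intro x hx
    by_contra h
    push_neg at h
    have h2 : σ⁻¹ x = x := (σ⁻¹).injective (hσ' (σ⁻¹ x) h)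
    rw [h2] at h
    omega
  have key : ∀ a : Fin d,
      F ((i ∘ ⇑σ) ∘ ⇑(Equiv.swap a ⟨m, hm⟩)) = F (i ∘ ⇑(Equiv.swap (σ a) ⟨m, hm⟩)) := by
    intro a
    have h1 : (i ∘ ⇑σ) ∘ ⇑(Equiv.swap a ⟨m, hm⟩)
        = (i ∘ ⇑(Equiv.swap (σ a) (σ ⟨m, hm⟩))) ∘ ⇑σ := by
      funext p
      simp [Equiv.swap_apply_apply, Equiv.Perm.mul_apply]
    rw [h1, hσM, hF σ hσ]
  let e : Equiv.Perm (Fin m) :=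
    { toFun := fun j => ⟨(σ (Fin.castLE hm.le j) : ℕ), hlt _ j.isLt⟩
      invFun := fun j => ⟨(σ⁻¹ (Fin.castLE hm.le j) : ℕ), hlt' _ j.isLt⟩
      left_inv := by
        intro j
        apply Fin.ext
        have h3 : Fin.castLE hm.le (⟨(σ (Fin.castLE hm.le j) : ℕ), hlt _ j.isLt⟩ : Fin m)
            = σ (Fin.castLE hm.le j) := Fin.ext rfl
        simp only [h3, Equiv.Perm.inv_def, Equiv.symm_apply_apply, Fin.coe_castLE]
      right_inv := by
        intro j
        apply Fin.ext
        have h3 : Fin.castLE hm.le (⟨(σ⁻¹ (Fin.castLE hm.le j) : ℕ), hlt' _ j.isLt⟩ : Fin m)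
            = σ⁻¹ (Fin.castLE hm.le j) := Fin.ext rfl
        simp only [h3]; simp only [Equiv.Perm.inv_def, Equiv.apply_symm_apply, Fin.coe_castLE] }
  have hcast : ∀ j : Fin m, Fin.castLE hm.le (e j) = σ (Fin.castLE hm.le j) :=
    fun j => Fin.ext rfl
  calc F (i ∘ ⇑σ) + ∑ j : Fin m, F ((i ∘ ⇑σ) ∘ ⇑(Equiv.swap (Fin.castLE hm.le j) ⟨m, hm⟩))
      = F i + ∑ j : Fin m, F (i ∘ ⇑(Equiv.swap (Fin.castLE hm.le (e j)) ⟨m, hm⟩)) := by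
        rw [hF σ hσ i]
        congr 1
        refine Finset.sum_congr rfl fun j _ => ?_
        rw [key (Fin.castLE hm.le j), hcast j]
    _ = _ := by
        congr 1
        exact Equiv.sum_comp e
          (fun j => F (i ∘ ⇑(Equiv.swap (Fin.castLE hm.le j) ⟨m, hm⟩)))

private lemma lemB {d n m : ℕ} (hm : m < d) (F : (Fin d → Fin n) → ℂ)
    (hF : ∀ σ : Equiv.Perm (Fin d), (∀ p : Fin d, m ≤ (p : ℕ) → σ p = p) →
      ∀ i : Fin d → Fin n, F (i ∘ ⇑σ) = F i)
    (a : Fin d) (ha : (a : ℕ) < m) (i : Fin d → Fin n) :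
    F (i ∘ ⇑(Equiv.swap a ⟨m, hm⟩))
        + ∑ j : Fin m, F ((i ∘ ⇑(Equiv.swap a ⟨m, hm⟩))
            ∘ ⇑(Equiv.swap (Fin.castLE hm.le j) ⟨m, hm⟩))
      = F i + ∑ j : Fin m, F (i ∘ ⇑(Equiv.swap (Fin.castLE hm.le j) ⟨m, hm⟩)) := by
  set M : Fin d := ⟨m, hm⟩ with hMdef
  set x : Fin m := ⟨(a : ℕ), ha⟩ with hxdef
  have hax : Fin.castLE hm.le x = a := Fin.ext rfl
  have haM : a ≠ M := by
    intro h
    have := congrArg Fin.val h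
    simp [hMdef] at this
    omega
  -- term at j = x
  have h1 : F ((i ∘ ⇑(Equiv.swap a M)) ∘ ⇑(Equiv.swap (Fin.castLE hm.le x) M)) = F i := by
    rw [hax]
    have : (i ∘ ⇑(Equiv.swap a M)) ∘ ⇑(Equiv.swap a M) = i := by
      funext p; simp
    rw [this]
  -- terms at j ≠ x
  have h2 : ∀ j ∈ Finset.univ.erase x,
      F ((i ∘ ⇑(Equiv.swap a M)) ∘ ⇑(Equiv.swap (Fin.castLE hm.le j) M))
        = F (i ∘ ⇑(Equiv.swap (Fin.castLE hm.le j) M)) := by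
    intro j hj
    have hjx : j ≠ x := (Finset.mem_erase.mp hj).1
    set b : Fin d := Fin.castLE hm.le j with hbdef
    have hbm : (b : ℕ) < m := j.isLt
    have hba : b ≠ a := by
      intro h
      apply hjx
      apply Fin.ext
      have := congrArg Fin.val h
      simpa [hbdef, hxdef] using this
    have hbM : b ≠ M := by
      intro h
      have := congrArg Fin.val h
      simp [hbdef, hMdef] at this
      omega
    have hperm : Equiv.swap a M * Equiv.swap b M = Equiv.swap b M * Equiv.swap b a := by
      apply Equiv.ext
      intro p
      simp only [Equiv.Perm.mul_apply, Equiv.swap_apply_def]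
      split_ifs <;> simp_all [Fin.ext_iff, hMdef]
    have hfun : (i ∘ ⇑(Equiv.swap a M)) ∘ ⇑(Equiv.swap b M)
        = (i ∘ ⇑(Equiv.swap b M)) ∘ ⇑(Equiv.swap b a) := by
      funext p
      have := congrFun (congrArg (fun (g : Equiv.Perm (Fin d)) => i ∘ ⇑g) hperm) p
      simpa [Equiv.Perm.mul_apply] using this
    rw [hfun]
    apply hF
    intro p hp
    apply Equiv.swap_apply_of_ne_of_ne
    · intro h; rw [h] at hp; omega
    · intro h; rw [h] at hp; omega
  rw [← Finset.add_sum_erase _ _ (Finset.mem_univ x),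
    ← Finset.add_sum_erase Finset.univ
      (fun j : Fin m => F (i ∘ ⇑(Equiv.swap (Fin.castLE hm.le j) M))) (Finset.mem_univ x),
    h1, Finset.sum_congr rfl h2, hax]
  ring

theorem stmt_0 {d n m : ℕ} (hm : m < d) (F : (Fin d → Fin n) → ℂ)
    (hF : ∀ σ : Equiv.Perm (Fin d), (∀ p : Fin d, m ≤ (p : ℕ) → σ p = p) →
      ∀ i : Fin d → Fin n, F (i ∘ ⇑σ) = F i) :
    ∀ σ : Equiv.Perm (Fin d), (∀ p : Fin d, m + 1 ≤ (p : ℕ) → σ p = p) →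
      ∀ i : Fin d → Fin n,
        (F (i ∘ ⇑σ)
            + ∑ j : Fin m, F ((i ∘ ⇑σ) ∘ ⇑(Equiv.swap (Fin.castLE hm.le j) ⟨m, hm⟩)))
          = F i + ∑ j : Fin m, F (i ∘ ⇑(Equiv.swap (Fin.castLE hm.le j) ⟨m, hm⟩)) := by
  intro σ hσ i
  by_cases hM : σ ⟨m, hm⟩ = ⟨m, hm⟩
  · apply lemA hm F hF σ _ i
    intro p hp
    rcases eq_or_lt_of_le hp with h | h
    · have hpM : p = ⟨m, hm⟩ := Fin.ext h.symm
      rw [hpM, hM]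
    · exact hσ p h
  · set M : Fin d := ⟨m, hm⟩ with hMdef
    set a : Fin d := σ⁻¹ M with hadef
    have haM : σ a = M := σ.apply_symm_apply M
    have ha : (a : ℕ) < m := by
      by_contra h
      push_neg at h
      rcases eq_or_lt_of_le h with h' | h'
      · have : a = M := Fin.ext h'.symm
        rw [this] at haM
        exact hM haM
      · have h2 : σ a = a := hσ a h'
        rw [haM] at h2
        rw [← h2] at h'
        simp [hMdef] at h'
    set τ : Equiv.Perm (Fin d) := σ * Equiv.swap a M with hτdef
    have hτ : ∀ p : Fin d, m ≤ (p : ℕ) → τ p = p := by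
      intro p hp
      rcases eq_or_lt_of_le hp with h | h
      · have hpM : p = M := Fin.ext h.symm
        simp [hτdef, hpM, Equiv.Perm.mul_apply, Equiv.swap_apply_right, haM]
      · have hpa : p ≠ a := by intro e; rw [e] at h; omega
        have hpM : p ≠ M := by
          intro e
          have := congrArg Fin.val e
          simp [hMdef] at this
          omega
        simp [hτdef, Equiv.Perm.mul_apply, Equiv.swap_apply_of_ne_of_ne hpa hpM,
          hσ p (by omega)]
    have hdecomp : i ∘ ⇑σ = (i ∘ ⇑τ) ∘ ⇑(Equiv.swap a M) := by
      funext p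
      simp [hτdef, Equiv.Perm.mul_apply]
    rw [hdecomp, lemB hm F hF a ha (i ∘ ⇑τ)]
    exact lemA hm F hF τ hτ i
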